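/- Let E be a real inner product space, let F : E → ℝ be differentiable with gradient ∇F that is Lipschitz with constant C ≥ 0, and let G ≥ 0, G' ≥ 0. Let (α_t)_{t≥0} be positive reals, let (g_t)_{t≥0} be vectors in E with ‖g_t‖ ≤ G for all t, and define θ_{t+1} = θ_t − α_t g_t starting from θ₀ ∈ E. If ‖∇F(θ_t)‖ ≤ G' for all t, then for every T ≥ 1: Σ_{t=0}^{T−1} α_t ‖∇F(θ_t)‖² ≤ F(θ₀) − F(θ_T) + G' Σ_{t=0}^{T−1} α_t ‖g_t − ∇F(θ_t)‖ + (C G² / 2) Σ_{t=0}^{T−1} α_t². -/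

import Mathlib

open Finset

lemma descent_lemma_aux
    {E : Type*} [NormedAddCommGroup E] [InnerProductSpace ℝ E]
    (F : E → ℝ) (F' : E → E) (hF : ∀ x, HasFDerivAt F (InnerProductSpace.toDualMap ℝ E (F' x)) x)
    (C : ℝ) (hC : 0 ≤ C) (hLip : ∀ x y, ‖F' x - F' y‖ ≤ C * ‖x - y‖)
    (x v : E) :
    F (x + v) ≤ F x + inner ℝ (F' x) v + C / 2 * ‖v‖ ^ 2 := by
  set ψ : ℝ → ℝ := fun s => F (x + s • v) - s * inner ℝ (F' x) v - C * ‖v‖ ^ 2 / 2 * s ^ 2 with hψ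
  have hd : ∀ s : ℝ, HasDerivAt ψ
      ((inner ℝ (F' (x + s • v)) v : ℝ) - inner ℝ (F' x) v - C * ‖v‖ ^ 2 * s) s := by
    intro s
    have h1 : HasDerivAt (fun s : ℝ => x + s • v) v s := by
      simpa using ((hasDerivAt_id s).smul_const v).const_add x
    have h2 : HasDerivAt (fun s : ℝ => F (x + s • v))
        ((inner ℝ (F' (x + s • v)) v : ℝ)) s := by
      have := (hF (x + s • v)).comp_hasDerivAt s h1
      simp only [InnerProductSpace.toDualMap_apply_apply, ContinuousLinearMap.comp_apply] at this
      exact this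
    have h3 : HasDerivAt (fun s : ℝ => s * (inner ℝ (F' x) v : ℝ)) (inner ℝ (F' x) v) s := by
      simpa using (hasDerivAt_id s).mul_const (inner ℝ (F' x) v : ℝ)
    have h4 : HasDerivAt (fun s : ℝ => C * ‖v‖ ^ 2 / 2 * s ^ 2) (C * ‖v‖ ^ 2 * s) s := by
      have := (hasDerivAt_pow 2 s).const_mul (C * ‖v‖ ^ 2 / 2)
      exact this.congr_deriv (by ring)
    exact (h2.sub h3).sub h4
  have hmono : AntitoneOn ψ (Set.Icc (0:ℝ) 1) := by
    apply antitoneOn_of_deriv_nonpos (convex_Icc 0 1)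
    · exact fun s _ => (hd s).continuousAt.continuousWithinAt
    · exact fun s _ => ((hd s).differentiableAt).differentiableWithinAt
    · intro s hs
      rw [(hd s).deriv]
      rw [interior_Icc] at hs
      have key : (inner ℝ (F' (x + s • v)) v : ℝ) - inner ℝ (F' x) v ≤ C * ‖v‖ ^ 2 * s := by
        have h1 : (inner ℝ (F' (x + s • v)) v : ℝ) - inner ℝ (F' x) v
            = inner ℝ (F' (x + s • v) - F' x) v := by
          rw [inner_sub_left]
        rw [h1]
        calc (inner ℝ (F' (x + s • v) - F' x) v : ℝ)
            ≤ ‖F' (x + s • v) - F' x‖ * ‖v‖ := real_inner_le_norm _ _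
          _ ≤ C * ‖x + s • v - x‖ * ‖v‖ := by
              gcongr; exact hLip _ _
          _ = C * ‖v‖ ^ 2 * s := by
              simp [norm_smul, abs_of_pos hs.1]; ring
      linarith
  have h01 : ψ 1 ≤ ψ 0 := hmono (by norm_num) (by norm_num) (by norm_num)
  simp only [hψ, one_smul, zero_smul, add_zero, one_pow, one_mul, zero_mul, sub_zero,
    mul_zero, zero_pow] at h01
  nlinarith [h01]

/-- Deterministic inexact-gradient-descent accumulation inequality (backbone of
Lemma 3): with `θ_{t+1} = θ_t − α_t g_t`, gradients bounded by `G'`, update vectors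
bounded by `G`, and `C`-Lipschitz gradient `∇F`,
`Σ_{t<T} α_t ‖∇F(θ_t)‖² ≤ F(θ₀) − F(θ_T) + G' Σ_{t<T} α_t ‖g_t − ∇F(θ_t)‖
  + (C G²/2) Σ_{t<T} α_t²`. -/
theorem inexact_gradient_descent_accumulation
    {E : Type*} [NormedAddCommGroup E] [InnerProductSpace ℝ E]
    (F : E → ℝ) (F' : E → E) (hF : ∀ x, HasFDerivAt F (InnerProductSpace.toDualMap ℝ E (F' x)) x)
    (C : ℝ) (hC : 0 ≤ C) (hLip : ∀ x y, ‖F' x - F' y‖ ≤ C * ‖x - y‖)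
    (G G' : ℝ) (hG : 0 ≤ G) (hG' : 0 ≤ G')
    (α : ℕ → ℝ) (hα : ∀ t, 0 < α t)
    (g : ℕ → E) (hg : ∀ t, ‖g t‖ ≤ G)
    (θ : ℕ → E) (hθ : ∀ t, θ (t + 1) = θ t - α t • g t)
    (hgrad : ∀ t, ‖F' (θ t)‖ ≤ G') :
    ∀ T : ℕ, 1 ≤ T →
      ∑ t ∈ Finset.range T, α t * ‖F' (θ t)‖ ^ 2 ≤
        F (θ 0) - F (θ T) + G' * ∑ t ∈ Finset.range T, α t * ‖g t - F' (θ t)‖ +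
          (C * G ^ 2 / 2) * ∑ t ∈ Finset.range T, (α t) ^ 2 := by
  intro T _
  have step : ∀ t, α t * ‖F' (θ t)‖ ^ 2 ≤
      (F (θ t) - F (θ (t + 1))) + G' * (α t * ‖g t - F' (θ t)‖)
        + (C * G ^ 2 / 2) * (α t) ^ 2 := by
    intro t
    have hdesc := descent_lemma_aux F F' hF C hC hLip (θ t) (-(α t • g t))
    rw [← sub_eq_add_neg, ← hθ t] at hdesc
    have hinner : (inner ℝ (F' (θ t)) (-(α t • g t)) : ℝ)
        = - (α t * inner ℝ (F' (θ t)) (g t)) := by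
      rw [inner_neg_right, real_inner_smul_right]
    have hsplit : (inner ℝ (F' (θ t)) (g t) : ℝ)
        = ‖F' (θ t)‖ ^ 2 + inner ℝ (F' (θ t)) (g t - F' (θ t)) := by
      rw [inner_sub_right, real_inner_self_eq_norm_sq]; ring
    have hcs : - (inner ℝ (F' (θ t)) (g t - F' (θ t)) : ℝ) ≤ G' * ‖g t - F' (θ t)‖ := by
      calc - (inner ℝ (F' (θ t)) (g t - F' (θ t)) : ℝ)
          ≤ ‖F' (θ t)‖ * ‖g t - F' (θ t)‖ := by
            rw [← inner_neg_right, neg_sub, norm_sub_rev]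
            exact real_inner_le_norm _ _
        _ ≤ G' * ‖g t - F' (θ t)‖ := by
            exact mul_le_mul_of_nonneg_right (hgrad t) (norm_nonneg _)
    have hnv : ‖-(α t • g t)‖ ^ 2 ≤ (α t) ^ 2 * G ^ 2 := by
      rw [norm_neg, norm_smul]
      have h1 : |α t| = α t := abs_of_pos (hα t)
      rw [Real.norm_eq_abs, h1, mul_pow]
      gcongr
      exact hg t
    have hαt := (hα t).le
    nlinarith [hdesc, hcs, mul_le_mul_of_nonneg_left hcs hαt,
      mul_le_mul_of_nonneg_left hnv (by positivity : (0:ℝ) ≤ C / 2)]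
  calc ∑ t ∈ Finset.range T, α t * ‖F' (θ t)‖ ^ 2
      ≤ ∑ t ∈ Finset.range T, ((F (θ t) - F (θ (t + 1))) + G' * (α t * ‖g t - F' (θ t)‖)
          + (C * G ^ 2 / 2) * (α t) ^ 2) := Finset.sum_le_sum fun t _ => step t
    _ = F (θ 0) - F (θ T) + G' * ∑ t ∈ Finset.range T, α t * ‖g t - F' (θ t)‖ +
          (C * G ^ 2 / 2) * ∑ t ∈ Finset.range T, (α t) ^ 2 := by
        rw [Finset.sum_add_distrib, Finset.sum_add_distrib, ← Finset.mul_sum, ← Finset.mul_sum,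
          Finset.sum_range_sub' (fun t => F (θ t))]
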